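/- (Theorem 3, coherence condition implies exact recovery condition) Let D ∈ ℂ^{L×N} have column-blocks D[ℓ] of size L×d with D[ℓ]^H D[ℓ] = I_d for all ℓ, and block-coherence μ_B = max_{ℓ≠r}(1/d)ρ(D[ℓ]^H D[r]). If kd < (μ_B^{-1} + d)/2, then for every submatrix D_0 consisting of k of the blocks (with D̄_0 the remaining blocks), ρ_c(D_0^† D̄_0) < 1. -/

import Mathlib

open Matrix
open scoped Matrix.Norms.L2Operator
set_option linter.unusedSectionVars false
set_option maxHeartbeats 1000000

noncomputable def rho {m n : Type*} [Fintype m] [Fintype n] [DecidableEq n]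
    (A : Matrix m n ℂ) : ℝ :=
  ‖LinearMap.toContinuousLinearMap (Matrix.toEuclideanLin A)‖

noncomputable def enorm {n : Type*} [Fintype n] (v : n → ℂ) : ℝ :=
  Real.sqrt (∑ i, ‖v i‖ ^ 2)

def blk {α β γ : Type*} (D : Matrix α (β × γ) ℂ) (ℓ : β) : Matrix α γ ℂ :=
  Matrix.of fun i j => D i (ℓ, j)

def blk2 {ι κ d₁ d₂ : Type*} (A : Matrix (ι × d₁) (κ × d₂) ℂ) (ℓ : ι) (r : κ) :
    Matrix d₁ d₂ ℂ :=
  Matrix.of fun i j => A (ℓ, i) (r, j)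

noncomputable def rhoc {ι κ d : Type*} [Fintype ι] [Fintype κ] [Fintype d] [DecidableEq d]
    (A : Matrix (ι × d) (κ × d) ℂ) : ℝ :=
  ⨆ r : κ, ∑ ℓ : ι, rho (blk2 A ℓ r)

noncomputable def vnorm1 {ι d : Type*} [Fintype ι] [Fintype d] (v : ι × d → ℂ) : ℝ :=
  ∑ ℓ : ι, enorm (fun j => v (ℓ, j))

noncomputable def vnormInf {ι d : Type*} [Fintype ι] [Fintype d] (v : ι × d → ℂ) : ℝ :=
  ⨆ ℓ : ι, enorm (fun j => v (ℓ, j))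

noncomputable def pinv {α n : Type*} [Fintype α] [Fintype n] [DecidableEq n]
    (B : Matrix α n ℂ) : Matrix n α ℂ :=
  (Bᴴ * B)⁻¹ * Bᴴ

noncomputable def muB {L M d : ℕ} (D : Matrix (Fin L) (Fin M × Fin d) ℂ) : ℝ :=
  ⨆ p : {p : Fin M × Fin M // p.1 ≠ p.2},
    (1 / (d : ℝ)) * rho ((blk D p.val.1)ᴴ * blk D p.val.2)

section enormlems
variable {n : Type*} [Fintype n]
lemma enorm_eq (v : n → ℂ) : _root_.enorm v = ‖(EuclideanSpace.equiv n ℂ).symm v‖ :=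
  (EuclideanSpace.norm_eq _).symm
lemma enorm_nonneg (v : n → ℂ) : 0 ≤ _root_.enorm v := Real.sqrt_nonneg _
lemma enorm_eq_zero_of_enorm {v : n → ℂ} (h : _root_.enorm v = 0) : v = 0 := by
  rw [enorm_eq] at h
  have h2 := norm_eq_zero.mp h
  funext i
  exact congrFun (show v = 0 by simpa using h2) i
lemma enorm_neg' (v : n → ℂ) : _root_.enorm (-v) = _root_.enorm v := by
  rw [enorm_eq, enorm_eq]
  have : (EuclideanSpace.equiv n ℂ).symm (-v) = -((EuclideanSpace.equiv n ℂ).symm v) := rfl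
  rw [this, norm_neg]
lemma enorm_sum_le' {κ : Type*} (s : Finset κ) (f : κ → n → ℂ) :
    _root_.enorm (∑ t ∈ s, f t) ≤ ∑ t ∈ s, _root_.enorm (f t) := by
  simp only [enorm_eq]
  have : (EuclideanSpace.equiv n ℂ).symm (∑ t ∈ s, f t)
      = ∑ t ∈ s, (EuclideanSpace.equiv n ℂ).symm (f t) := by
    simp [map_sum]
  rw [this]
  exact norm_sum_le _ _
end enormlems

section rholems
variable {m n l : Type*} [Fintype m] [Fintype n] [Fintype l] [DecidableEq n] [DecidableEq l]
lemma rho_eq_norm (A : Matrix m n ℂ) : rho A = ‖A‖ := rfl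
lemma rho_nonneg (A : Matrix m n ℂ) : 0 ≤ rho A := by rw [rho_eq_norm]; exact norm_nonneg _
lemma rho_zero : rho (0 : Matrix m n ℂ) = 0 := by rw [rho_eq_norm]; exact norm_zero
lemma rho_sub_le (A B : Matrix m n ℂ) : rho (A - B) ≤ rho A + rho B := by
  simp only [rho_eq_norm]; exact norm_sub_le _ _
lemma rho_mul_le (A : Matrix m n ℂ) (B : Matrix n l ℂ) : rho (A * B) ≤ rho A * rho B := by
  simp only [rho_eq_norm]; exact Matrix.l2_opNorm_mul A B
lemma rho_one_le [Nonempty n] : rho (1 : Matrix n n ℂ) ≤ 1 := by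
  have h := Matrix.l2_opNorm_conjTranspose_mul_self (1 : Matrix n n ℂ)
  rw [Matrix.conjTranspose_one, one_mul] at h
  nlinarith [norm_nonneg (1 : Matrix n n ℂ), rho_eq_norm (1 : Matrix n n ℂ)]
lemma rho_sum_le {κ : Type*} (s : Finset κ) (f : κ → Matrix m n ℂ) :
    rho (∑ t ∈ s, f t) ≤ ∑ t ∈ s, rho (f t) := by
  simp only [rho_eq_norm]; exact norm_sum_le _ _
lemma enorm_mulVec_le (A : Matrix m n ℂ) (v : n → ℂ) :
    _root_.enorm (A.mulVec v) ≤ rho A * _root_.enorm v := by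
  classical
  have h := Matrix.l2_opNorm_mulVec A ((EuclideanSpace.equiv n ℂ).symm v)
  rw [enorm_eq, enorm_eq, rho_eq_norm]
  exact h
end rholems

section rhoclems
variable {ι κ τ d : Type*} [Fintype ι] [Fintype κ] [Fintype τ] [Fintype d] [DecidableEq d]

lemma blk2_mul (X : Matrix (ι × d) (τ × d) ℂ) (Y : Matrix (τ × d) (κ × d) ℂ) (ℓ : ι) (r : κ) :
    blk2 (X * Y) ℓ r = ∑ t : τ, blk2 X ℓ t * blk2 Y t r := by
  ext i j
  simp [blk2, Matrix.mul_apply, Matrix.sum_apply, Fintype.sum_prod_type]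

lemma blk2_sub (X Y : Matrix (ι × d) (κ × d) ℂ) (ℓ : ι) (r : κ) :
    blk2 (X - Y) ℓ r = blk2 X ℓ r - blk2 Y ℓ r := rfl

lemma blk2_one [DecidableEq ι] (ℓ r : ι) :
    blk2 (1 : Matrix (ι × d) (ι × d) ℂ) ℓ r = if ℓ = r then 1 else 0 := by
  ext i j
  by_cases h : ℓ = r <;> simp [blk2, Matrix.one_apply, Prod.ext_iff, h]

lemma col_sum_le_rhoc (A : Matrix (ι × d) (κ × d) ℂ) (r : κ) :
    ∑ ℓ : ι, rho (blk2 A ℓ r) ≤ rhoc A :=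
  le_ciSup (f := fun r : κ => ∑ ℓ : ι, rho (blk2 A ℓ r))
    (Set.Finite.bddAbove (Set.finite_range _)) r

lemma rhoc_nonneg (A : Matrix (ι × d) (κ × d) ℂ) : 0 ≤ rhoc A :=
  Real.iSup_nonneg fun r => Finset.sum_nonneg fun ℓ _ => rho_nonneg _

lemma rhoc_le {c : ℝ} (A : Matrix (ι × d) (κ × d) ℂ) (hc : 0 ≤ c)
    (h : ∀ r, ∑ ℓ : ι, rho (blk2 A ℓ r) ≤ c) : rhoc A ≤ c :=
  Real.iSup_le h hc

lemma rhoc_mul_le [Nonempty τ] (X : Matrix (ι × d) (τ × d) ℂ) (Y : Matrix (τ × d) (κ × d) ℂ) :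
    rhoc (X * Y) ≤ rhoc X * rhoc Y := by
  refine rhoc_le _ (mul_nonneg (rhoc_nonneg X) (rhoc_nonneg Y)) fun r => ?_
  calc ∑ ℓ : ι, rho (blk2 (X * Y) ℓ r)
      ≤ ∑ ℓ : ι, ∑ t : τ, rho (blk2 X ℓ t * blk2 Y t r) := by
        refine Finset.sum_le_sum fun ℓ _ => ?_
        rw [blk2_mul]
        exact rho_sum_le _ _
    _ ≤ ∑ ℓ : ι, ∑ t : τ, rho (blk2 X ℓ t) * rho (blk2 Y t r) :=
        Finset.sum_le_sum fun ℓ _ => Finset.sum_le_sum fun t _ => rho_mul_le _ _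
    _ = ∑ t : τ, (∑ ℓ : ι, rho (blk2 X ℓ t)) * rho (blk2 Y t r) := by
        rw [Finset.sum_comm]
        simp [Finset.sum_mul]
    _ ≤ ∑ t : τ, rhoc X * rho (blk2 Y t r) :=
        Finset.sum_le_sum fun t _ =>
          mul_le_mul_of_nonneg_right (col_sum_le_rhoc X t) (rho_nonneg _)
    _ = rhoc X * ∑ t : τ, rho (blk2 Y t r) := by rw [Finset.mul_sum]
    _ ≤ rhoc X * rhoc Y :=
        mul_le_mul_of_nonneg_left (col_sum_le_rhoc Y r) (rhoc_nonneg X)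

lemma rhoc_sub_le (X Y : Matrix (ι × d) (κ × d) ℂ) :
    rhoc (X - Y) ≤ rhoc X + rhoc Y := by
  refine rhoc_le _ (add_nonneg (rhoc_nonneg X) (rhoc_nonneg Y)) fun r => ?_
  calc ∑ ℓ : ι, rho (blk2 (X - Y) ℓ r)
      ≤ ∑ ℓ : ι, (rho (blk2 X ℓ r) + rho (blk2 Y ℓ r)) := by
        refine Finset.sum_le_sum fun ℓ _ => ?_
        rw [blk2_sub]; exact rho_sub_le _ _
    _ = (∑ ℓ : ι, rho (blk2 X ℓ r)) + ∑ ℓ : ι, rho (blk2 Y ℓ r) := Finset.sum_add_distrib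
    _ ≤ rhoc X + rhoc Y := add_le_add (col_sum_le_rhoc X r) (col_sum_le_rhoc Y r)

lemma rhoc_one_le [DecidableEq ι] [Nonempty d] :
    rhoc (1 : Matrix (ι × d) (ι × d) ℂ) ≤ 1 := by
  refine rhoc_le _ zero_le_one fun r => ?_
  have : ∀ ℓ : ι, rho (blk2 (1 : Matrix (ι × d) (ι × d) ℂ) ℓ r)
      = if ℓ = r then rho (1 : Matrix d d ℂ) else 0 := by
    intro ℓ
    by_cases h : ℓ = r <;> simp [blk2_one, h, rho_zero]
  simp only [this, Finset.sum_ite_eq', Finset.mem_univ, if_true]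
  exact rho_one_le

lemma vnorm1_nonneg (v : ι × d → ℂ) : 0 ≤ vnorm1 v :=
  Finset.sum_nonneg fun ℓ _ => enorm_nonneg _

lemma vnorm1_eq_zero {v : ι × d → ℂ} (h : vnorm1 v = 0) : v = 0 := by
  have h2 : ∀ ℓ ∈ Finset.univ, _root_.enorm (fun j => v (ℓ, j)) = 0 :=
    (Finset.sum_eq_zero_iff_of_nonneg fun ℓ _ => enorm_nonneg _).mp h
  funext p
  have := congrFun (enorm_eq_zero_of_enorm (h2 p.1 (Finset.mem_univ _))) p.2
  simpa using this

lemma vnorm1_mulVec_le (H : Matrix (ι × d) (κ × d) ℂ) (x : κ × d → ℂ) :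
    vnorm1 (H.mulVec x) ≤ rhoc H * vnorm1 x := by
  have key : ∀ ℓ : ι, (fun j => (H.mulVec x) (ℓ, j))
      = ∑ r : κ, (blk2 H ℓ r).mulVec (fun s => x (r, s)) := by
    intro ℓ
    funext j
    simp [Matrix.mulVec, dotProduct, blk2, Fintype.sum_prod_type,
      Finset.sum_apply]
  calc vnorm1 (H.mulVec x)
      = ∑ ℓ : ι, _root_.enorm (∑ r : κ, (blk2 H ℓ r).mulVec (fun s => x (r, s))) := by
        unfold vnorm1
        exact Finset.sum_congr rfl fun ℓ _ => by rw [key ℓ]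
    _ ≤ ∑ ℓ : ι, ∑ r : κ, _root_.enorm ((blk2 H ℓ r).mulVec (fun s => x (r, s))) :=
        Finset.sum_le_sum fun ℓ _ => enorm_sum_le' _ _
    _ ≤ ∑ ℓ : ι, ∑ r : κ, rho (blk2 H ℓ r) * _root_.enorm (fun s => x (r, s)) :=
        Finset.sum_le_sum fun ℓ _ => Finset.sum_le_sum fun r _ => enorm_mulVec_le _ _
    _ = ∑ r : κ, (∑ ℓ : ι, rho (blk2 H ℓ r)) * _root_.enorm (fun s => x (r, s)) := by
        rw [Finset.sum_comm]
        simp [Finset.sum_mul]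
    _ ≤ ∑ r : κ, rhoc H * _root_.enorm (fun s => x (r, s)) :=
        Finset.sum_le_sum fun r _ =>
          mul_le_mul_of_nonneg_right (col_sum_le_rhoc H r) (enorm_nonneg _)
    _ = rhoc H * vnorm1 x := by rw [vnorm1, Finset.mul_sum]

end rhoclems

lemma vnorm1_neg {ι d : Type*} [Fintype ι] [Fintype d] (v : ι × d → ℂ) :
    vnorm1 (-v) = vnorm1 v := by
  unfold vnorm1
  refine Finset.sum_congr rfl fun ℓ _ => ?_
  have : (fun j => (-v) (ℓ, j)) = -(fun j => v (ℓ, j)) := rfl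
  rw [this, enorm_neg']

lemma isUnit_det_one_add_of_rhoc_lt_one {ι d : Type*} [Fintype ι] [Fintype d]
    [DecidableEq ι] [DecidableEq d] (H : Matrix (ι × d) (ι × d) ℂ) (h : rhoc H < 1) :
    IsUnit (1 + H).det := by
  rw [isUnit_iff_ne_zero]
  intro hdet
  obtain ⟨v, hv, hv0⟩ := (Matrix.exists_mulVec_eq_zero_iff).mpr hdet
  have hvv : v = -(H.mulVec v) := by
    rw [Matrix.add_mulVec, Matrix.one_mulVec] at hv0
    exact eq_neg_of_add_eq_zero_left hv0
  have h1 : vnorm1 v ≤ rhoc H * vnorm1 v := by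
    calc vnorm1 v = vnorm1 (-(H.mulVec v)) := by rw [← hvv]
      _ = vnorm1 (H.mulVec v) := vnorm1_neg _
      _ ≤ rhoc H * vnorm1 v := vnorm1_mulVec_le _ _
  have h2 : vnorm1 v = 0 := by nlinarith [vnorm1_nonneg v]
  exact hv (vnorm1_eq_zero h2)


theorem block_coherence_condition_implies_erc (L M d k : ℕ) (hd : 0 < d) (hk : 1 ≤ k)
    (D : Matrix (Fin L) (Fin M × Fin d) ℂ)
    (horth : ∀ ℓ : Fin M, (blk D ℓ)ᴴ * blk D ℓ = 1)
    (hmu : 0 < muB D)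
    (hcond : (k * d : ℝ) < ((muB D)⁻¹ + d) / 2)
    (S : Fin k → Fin M) (hS : Function.Injective S) :
    rhoc
      ((pinv (Matrix.of fun i (p : Fin k × Fin d) => D i (S p.1, p.2))) *
        Matrix.of fun i (p : {ℓ : Fin M // ∀ j, S j ≠ ℓ} × Fin d) => D i (p.1.val, p.2)) < 1 := by
  haveI : Nonempty (Fin k) := ⟨⟨0, hk⟩⟩
  haveI : Nonempty (Fin d) := ⟨⟨0, hd⟩⟩
  set μ := muB D with hμdef
  have hd' : (0:ℝ) < d := by exact_mod_cast hd
  -- block coherence bound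
  have hblock : ∀ ℓ r : Fin M, ℓ ≠ r → rho ((blk D ℓ)ᴴ * blk D r) ≤ (d:ℝ) * μ := by
    intro ℓ r hne
    have h1 : (1 / (d:ℝ)) * rho ((blk D ℓ)ᴴ * blk D r) ≤ μ :=
      le_ciSup (f := fun p : {p : Fin M × Fin M // p.1 ≠ p.2} =>
          (1 / (d : ℝ)) * rho ((blk D p.val.1)ᴴ * blk D p.val.2))
        (Set.Finite.bddAbove (Set.finite_range _)) ⟨(ℓ, r), hne⟩
    have h2 : (d:ℝ) * ((1 / (d:ℝ)) * rho ((blk D ℓ)ᴴ * blk D r)) ≤ (d:ℝ) * μ :=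
      mul_le_mul_of_nonneg_left h1 hd'.le
    calc rho ((blk D ℓ)ᴴ * blk D r)
        = (d:ℝ) * ((1 / (d:ℝ)) * rho ((blk D ℓ)ᴴ * blk D r)) := by
          field_simp
      _ ≤ (d:ℝ) * μ := h2
  set D₀ : Matrix (Fin L) (Fin k × Fin d) ℂ :=
    Matrix.of fun i (p : Fin k × Fin d) => D i (S p.1, p.2) with hD₀def
  set Dbar : Matrix (Fin L) ({ℓ : Fin M // ∀ j, S j ≠ ℓ} × Fin d) ℂ :=
    Matrix.of fun i (p : {ℓ : Fin M // ∀ j, S j ≠ ℓ} × Fin d) => D i (p.1.val, p.2) with hDbardef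
  set A : Matrix (Fin k × Fin d) (Fin k × Fin d) ℂ := D₀ᴴ * D₀ with hAdef
  set B : Matrix (Fin k × Fin d) ({ℓ : Fin M // ∀ j, S j ≠ ℓ} × Fin d) ℂ := D₀ᴴ * Dbar with hBdef
  have hAblk : ∀ t u : Fin k, blk2 A t u = (blk D (S t))ᴴ * blk D (S u) := by
    intro t u
    ext i j
    simp [hAdef, hD₀def, blk2, blk, Matrix.mul_apply, Matrix.conjTranspose_apply]
  have hBblk : ∀ (t : Fin k) (r : {ℓ : Fin M // ∀ j, S j ≠ ℓ}),
      blk2 B t r = (blk D (S t))ᴴ * blk D r.val := by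
    intro t r
    ext i j
    simp [hBdef, hD₀def, hDbardef, blk2, blk, Matrix.mul_apply, Matrix.conjTranspose_apply]
  set H : Matrix (Fin k × Fin d) (Fin k × Fin d) ℂ := A - 1 with hHdef
  set c : ℝ := (d:ℝ) * μ with hcdef
  have hc0 : 0 ≤ c := mul_nonneg hd'.le hmu.le
  -- column sums of H
  have colH : ∀ u : Fin k, ∑ t : Fin k, rho (blk2 H t u) ≤ ((k:ℝ) - 1) * c := by
    intro u
    rw [← Finset.sum_erase_add _ _ (Finset.mem_univ u)]
    have hdiagH : blk2 H u u = 0 := by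
      rw [hHdef, blk2_sub, hAblk, horth, blk2_one, if_pos rfl, sub_self]
    rw [hdiagH, rho_zero, add_zero]
    have hbd : ∀ t ∈ Finset.univ.erase u, rho (blk2 H t u) ≤ c := by
      intro t ht
      have htu : t ≠ u := Finset.ne_of_mem_erase ht
      have : blk2 H t u = blk2 A t u := by
        rw [hHdef, blk2_sub, blk2_one, if_neg htu, sub_zero]
      rw [this, hAblk]
      exact hblock _ _ fun hEq => htu (hS hEq)
    calc ∑ t ∈ Finset.univ.erase u, rho (blk2 H t u)
        ≤ (Finset.univ.erase u).card • c := Finset.sum_le_card_nsmul _ _ _ hbd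
      _ = ((k:ℝ) - 1) * c := by
          rw [Finset.card_erase_of_mem (Finset.mem_univ u), Finset.card_univ,
            Fintype.card_fin, nsmul_eq_mul, Nat.cast_sub hk, Nat.cast_one]
  have hδ0 : (0:ℝ) ≤ ((k:ℝ) - 1) * c := by
    have : (1:ℝ) ≤ (k:ℝ) := by exact_mod_cast hk
    exact mul_nonneg (by linarith) hc0
  have hrhocH : rhoc H ≤ ((k:ℝ) - 1) * c := rhoc_le _ hδ0 colH
  -- key numeric inequality
  have key : (k:ℝ) * c + ((k:ℝ) - 1) * c < 1 := by
    have h1 : (2 * (k:ℝ) - 1) * d < μ⁻¹ := by linarith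
    have h2 : (2 * (k:ℝ) - 1) * d * μ < μ⁻¹ * μ := mul_lt_mul_of_pos_right h1 hmu
    rw [inv_mul_cancel₀ (ne_of_gt hmu)] at h2
    calc (k:ℝ) * c + ((k:ℝ) - 1) * c = (2 * (k:ℝ) - 1) * d * μ := by
          rw [hcdef]; ring
      _ < 1 := h2
  have hkc0 : 0 ≤ (k:ℝ) * c := mul_nonneg (by positivity) hc0
  have hδlt1 : ((k:ℝ) - 1) * c < 1 := by linarith
  -- invertibility of A
  have hA1 : 1 + H = A := by rw [hHdef]; abel
  have hdet : IsUnit A.det := by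
    rw [← hA1]
    exact isUnit_det_one_add_of_rhoc_lt_one H (lt_of_le_of_lt hrhocH hδlt1)
  have hAinv : A * A⁻¹ = 1 := Matrix.mul_nonsing_inv A hdet
  have hinv_eq : A⁻¹ = 1 - H * A⁻¹ := by
    have h3 : (1 + H) * A⁻¹ = 1 := by rw [hA1, hAinv]
    rw [add_mul, one_mul] at h3
    exact eq_sub_of_add_eq h3
  -- bound on rhoc A⁻¹
  have hx : rhoc A⁻¹ ≤ 1 + ((k:ℝ) - 1) * c * rhoc A⁻¹ := by
    calc rhoc A⁻¹ = rhoc (1 - H * A⁻¹) := by rw [← hinv_eq]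
      _ ≤ rhoc 1 + rhoc (H * A⁻¹) := rhoc_sub_le _ _
      _ ≤ 1 + rhoc H * rhoc A⁻¹ := add_le_add rhoc_one_le (rhoc_mul_le _ _)
      _ ≤ 1 + ((k:ℝ) - 1) * c * rhoc A⁻¹ := by
          have := mul_le_mul_of_nonneg_right hrhocH (rhoc_nonneg A⁻¹)
          linarith
  -- bound on rhoc B
  have hrhocB : rhoc B ≤ (k:ℝ) * c := by
    refine rhoc_le _ hkc0 fun r => ?_
    have hbd : ∀ t ∈ Finset.univ, rho (blk2 B t r) ≤ c := by
      intro t _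
      rw [hBblk]
      exact hblock _ _ (r.2 t)
    calc ∑ t : Fin k, rho (blk2 B t r)
        ≤ (Finset.univ : Finset (Fin k)).card • c := Finset.sum_le_card_nsmul _ _ _ hbd
      _ = (k:ℝ) * c := by rw [Finset.card_univ, Fintype.card_fin, nsmul_eq_mul]
  -- rewrite the goal
  have hT : pinv D₀ * Dbar = A⁻¹ * B := by
    rw [pinv, ← hAdef, Matrix.mul_assoc, ← hBdef]
  rw [hT]
  have h1 : rhoc (A⁻¹ * B) ≤ rhoc A⁻¹ * rhoc B := rhoc_mul_le _ _
  have h2 : rhoc A⁻¹ * rhoc B ≤ rhoc A⁻¹ * ((k:ℝ) * c) :=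
    mul_le_mul_of_nonneg_left hrhocB (rhoc_nonneg _)
  rcases eq_or_lt_of_le (rhoc_nonneg A⁻¹) with hx0 | hx0
  · calc rhoc (A⁻¹ * B) ≤ rhoc A⁻¹ * rhoc B := h1
      _ = 0 := by rw [← hx0, zero_mul]
      _ < 1 := one_pos
  · have h3 : rhoc A⁻¹ * ((k:ℝ) * c) < rhoc A⁻¹ * (1 - ((k:ℝ) - 1) * c) :=
      mul_lt_mul_of_pos_left (by linarith) hx0
    nlinarith
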